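/- Let H be a complex Hilbert space and let T : H →ₗ.[ℂ] H be a symmetric, densely defined unbounded operator (LinearPMap with T.IsSymmetric). Let (e n)ₙ∈ℕ and (f m)ₘ∈ℕ be Hilbert bases of H (HilbertBasis ℕ ℂ H) all of whose vectors lie in T.domain, and let α, β : ℕ → ℝ be nonnegative sequences with ∑ₙ α n = 1 and ∑ₘ β m = 1. Assume that for every x ∈ H, ∑ₙ α n • ⟪e n, x⟫ • e n = ∑ₘ β m • ⟪f m, x⟫ • f m (equality of the two convergent sums in H, i.e. the two representations define the same density operator ρ), and that the series ∑ₙ α n · ‖⟪e n, T (e n)⟫‖ and ∑ₘ β m · ‖⟪f m, T (f m)⟫‖ are summable. Then ∑ₙ α n · ⟪e n, T (e n)⟫ = ∑ₘ β m · ⟪f m, T (f m)⟫. -/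

import Mathlib

open scoped ComplexInnerProductSpace

/-- A densely defined (in general unbounded) operator `T` is symmetric if
`⟪T x, y⟫ = ⟪x, T y⟫` for all `x, y` in its domain. -/
def LinearPMap.IsSymmetric {H : Type*} [NormedAddCommGroup H] [InnerProductSpace ℂ H]
    (T : H →ₗ.[ℂ] H) : Prop :=
  ∀ x y : T.domain, ⟪T x, (y : H)⟫ = ⟪(x : H), T y⟫

theorem stmt_8 {H : Type*} [NormedAddCommGroup H] [InnerProductSpace ℂ H] [CompleteSpace H]
    (T : H →ₗ.[ℂ] H) (hdense : Dense (T.domain : Set H)) (hT : T.IsSymmetric)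
    (e f : HilbertBasis ℕ ℂ H)
    (he : ∀ n, e n ∈ T.domain) (hf : ∀ m, f m ∈ T.domain)
    (α β : ℕ → ℝ) (hα : ∀ n, 0 ≤ α n) (hβ : ∀ m, 0 ≤ β m)
    (hα1 : ∑' n, α n = 1) (hβ1 : ∑' m, β m = 1)
    (hρ : ∀ x : H,
      (∑' n, (α n : ℂ) • ⟪e n, x⟫ • e n) = ∑' m, (β m : ℂ) • ⟪f m, x⟫ • f m)
    (hesum : Summable fun n => α n * ‖⟪e n, T ⟨e n, he n⟩⟫‖)
    (hfsum : Summable fun m => β m * ‖⟪f m, T ⟨f m, hf m⟩⟫‖) :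
    ∑' n, (α n : ℂ) * ⟪e n, T ⟨e n, he n⟩⟫ = ∑' m, (β m : ℂ) * ⟪f m, T ⟨f m, hf m⟩⟫ := by
  classical
  set t : ℕ → ℂ := fun n => ⟪e n, T ⟨e n, he n⟩⟫ with ht
  set s : ℕ → ℂ := fun m => ⟪f m, T ⟨f m, hf m⟩⟫ with hs
  set d : ℕ → ℕ → ℂ := fun n m => ⟪f m, e n⟫ * ⟪e n, T ⟨f m, hf m⟩⟫ with hd
  -- summability of the weights
  have hsα : Summable α := by
    by_contra h
    rw [tsum_eq_zero_of_not_summable h] at hα1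
    norm_num at hα1
  have hsβ : Summable β := by
    by_contra h
    rw [tsum_eq_zero_of_not_summable h] at hβ1
    norm_num at hβ1
  have hβle : ∀ m, β m ≤ 1 := by
    intro m
    rw [← hβ1]
    exact Summable.le_tsum hsβ m fun k _ => hβ k
  -- key pointwise identity : β m * ⟪f m, e n⟫ = α n * ⟪f m, e n⟫
  have key : ∀ n m, (β m : ℂ) * ⟪f m, e n⟫ = (α n : ℂ) * ⟪f m, e n⟫ := by
    intro n m
    set c : ℕ → ℂ := fun k => (β k : ℂ) * ⟪f k, e n⟫ with hc
    have hmem : Memℓp c 2 := by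
      apply memℓp_gen
      have h2 : Summable fun k => ‖(f.repr (e n)) k‖ ^ (2 : ENNReal).toReal :=
        (lp.memℓp (f.repr (e n))).summable (by norm_num)
      refine Summable.of_nonneg_of_le (fun k => ?_) (fun k => ?_) h2
      · positivity
      · apply Real.rpow_le_rpow (norm_nonneg _) _ (by positivity)
        rw [f.repr_apply_apply]
        calc ‖c k‖ = β k * ‖(⟪f k, e n⟫ : ℂ)‖ := by
              rw [hc, norm_mul, Complex.norm_real, Real.norm_eq_abs, abs_of_nonneg (hβ k)]
          _ ≤ 1 * ‖(⟪f k, e n⟫ : ℂ)‖ := by gcongr; exact hβle k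
          _ = ‖(⟪f k, e n⟫ : ℂ)‖ := one_mul _
    have hRHS : HasSum (fun k => (β k : ℂ) • ⟪f k, e n⟫ • f k)
        (f.repr.symm ⟨c, hmem⟩) := by
      have h0 := f.hasSum_repr_symm ⟨c, hmem⟩
      have hfun : (fun k => (↑(⟨c, hmem⟩ : lp (fun _ : ℕ => ℂ) 2) : ℕ → ℂ) k • f k)
          = fun k => (β k : ℂ) • ⟪f k, e n⟫ • f k := by
        funext k
        rw [smul_smul]
      rwa [hfun] at h0
    have hLHS : HasSum (fun k => (α k : ℂ) • ⟪e k, e n⟫ • e k) ((α n : ℂ) • e n) := by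
      have horth := orthonormal_iff_ite.mp e.orthonormal
      have hfun : (fun k => (α k : ℂ) • ⟪e k, e n⟫ • e k)
          = fun k => if k = n then (α n : ℂ) • e n else 0 := by
        funext k
        rw [horth k n]
        by_cases h : k = n <;> simp [h]
      rw [hfun]
      exact hasSum_ite_eq n _
    have heq : (α n : ℂ) • e n = f.repr.symm ⟨c, hmem⟩ := by
      rw [← hLHS.tsum_eq, ← hRHS.tsum_eq]
      exact hρ (e n)
    have h2 := congrArg (fun z => (f.repr z : ℕ → ℂ) m) heq
    simp only [LinearIsometryEquiv.apply_symm_apply, map_smul, lp.coeFn_smul, Pi.smul_apply,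
      smul_eq_mul] at h2
    rw [f.repr_apply_apply] at h2
    exact h2.symm
  -- orthogonality between eigenvectors of different eigenvalues
  have orth : ∀ n m, α n ≠ β m → (⟪f m, e n⟫ : ℂ) = 0 := by
    intro n m hne
    have h := key n m
    have h0 : ((β m : ℂ) - (α n : ℂ)) * ⟪f m, e n⟫ = 0 := by ring_nf; linear_combination h
    rcases mul_eq_zero.mp h0 with h1 | h1
    · exfalso
      apply hne
      have := sub_eq_zero.mp h1
      exact_mod_cast this.symm
    · exact h1
  have dzero : ∀ n m, α n ≠ β m → d n m = 0 := by
    intro n m hne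
    simp only [hd, orth n m hne, zero_mul]
  -- t n = ∑' m, d n m
  have htB : ∀ n, HasSum (fun m => d n m) (t n) := by
    intro n
    have h1 := (f.hasSum_repr (e n)).mapL (innerSL ℂ (T ⟨e n, he n⟩))
    have hfun : (fun m => (innerSL ℂ (T ⟨e n, he n⟩)) ((f.repr (e n)) m • f m))
        = fun m => d n m := by
      funext m
      rw [innerSL_apply_apply, inner_smul_right, f.repr_apply_apply]
      have hsym := hT ⟨e n, he n⟩ ⟨f m, hf m⟩
      simp only [hd]
      rw [show ((⟨f m, hf m⟩ : T.domain) : H) = f m from rfl,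
        show ((⟨e n, he n⟩ : T.domain) : H) = e n from rfl] at hsym
      rw [hsym]
    have hval : (innerSL ℂ (T ⟨e n, he n⟩)) (e n) = t n := by
      rw [innerSL_apply_apply, ht]
      have hsym := hT ⟨e n, he n⟩ ⟨e n, he n⟩
      rw [show ((⟨e n, he n⟩ : T.domain) : H) = e n from rfl] at hsym
      exact hsym
    rw [hfun, hval] at h1
    exact h1
  -- s m = ∑' n, d n m
  have hsC : ∀ m, HasSum (fun n => d n m) (s m) := by
    intro m
    have h1 := (e.hasSum_repr (f m)).mapL (innerSL ℂ (T ⟨f m, hf m⟩))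
    have h2 := h1.map (starRingEnd ℂ).toAddMonoidHom continuous_star
    have hfun : ((starRingEnd ℂ).toAddMonoidHom ∘
        fun n => (innerSL ℂ (T ⟨f m, hf m⟩)) ((e.repr (f m)) n • e n)) = fun n => d n m := by
      funext n
      simp only [Function.comp_apply, RingHom.toAddMonoidHom_eq_coe, AddMonoidHom.coe_coe]
      rw [innerSL_apply_apply, inner_smul_right, e.repr_apply_apply, map_mul, inner_conj_symm,
        inner_conj_symm]
    have hval : (starRingEnd ℂ).toAddMonoidHom ((innerSL ℂ (T ⟨f m, hf m⟩)) (f m)) = s m := by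
      simp only [RingHom.toAddMonoidHom_eq_coe, AddMonoidHom.coe_coe]
      rw [innerSL_apply_apply, inner_conj_symm]
    rw [hfun, hval] at h2
    exact h2
  -- summability of the weighted traces
  have hnorm : ∀ (γ : ℕ → ℝ) (u : ℕ → ℂ), (∀ k, 0 ≤ γ k) →
      (fun k => ‖(γ k : ℂ) * u k‖) = fun k => γ k * ‖u k‖ := by
    intro γ u hγ
    funext k
    rw [norm_mul, Complex.norm_real, Real.norm_eq_abs, abs_of_nonneg (hγ k)]
  have hDe : Summable fun n => (α n : ℂ) * t n := by
    apply Summable.of_norm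
    rw [hnorm α t hα]
    exact hesum
  have hDf : Summable fun m => (β m : ℂ) * s m := by
    apply Summable.of_norm
    rw [hnorm β s hβ]
    exact hfsum
  -- finiteness of fibers of positive values
  have hfin : ∀ (γ : ℕ → ℝ), Summable γ → ∀ l : ℝ, 0 < l → (γ ⁻¹' {l}).Finite := by
    intro γ hγsum l hl
    have hev : ∀ᶠ k in Filter.cofinite, γ k < l :=
      hγsum.tendsto_cofinite_zero.eventually_lt_const hl
    refine (Filter.eventually_cofinite.mp hev).subset ?_
    intro k hk
    simp only [Set.mem_preimage, Set.mem_singleton_iff] at hk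
    simp only [Set.mem_setOf_eq, hk, lt_irrefl, not_false_iff]
  -- fiberwise equality
  have fiberEq : ∀ l : ℝ,
      (∑' (n : (α ⁻¹' {l} : Set ℕ)), (α (n : ℕ) : ℂ) * t n)
        = ∑' (m : (β ⁻¹' {l} : Set ℕ)), (β (m : ℕ) : ℂ) * s m := by
    intro l
    by_cases hl : 0 < l
    · have hNf := hfin α hsα l hl
      have hMf := hfin β hsβ l hl
      have memN : ∀ k, k ∈ hNf.toFinset ↔ α k = l := by
        intro k
        simp [Set.Finite.mem_toFinset]
      have memM : ∀ k, k ∈ hMf.toFinset ↔ β k = l := by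
        intro k
        simp [Set.Finite.mem_toFinset]
      have eA : (∑' (n : (α ⁻¹' {l} : Set ℕ)), (α (n : ℕ) : ℂ) * t n)
          = ∑ n ∈ hNf.toFinset, (α n : ℂ) * t n := by
        refine (tsum_subtype (α ⁻¹' {l}) fun n => (α n : ℂ) * t n).trans ?_
        refine (tsum_eq_sum (s := hNf.toFinset) fun b hb =>
          Set.indicator_of_notMem (by simpa [Set.Finite.mem_toFinset] using hb) _).trans ?_
        exact Finset.sum_congr rfl fun n hn =>
          Set.indicator_of_mem (by simpa [Set.Finite.mem_toFinset] using hn) _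
      have eB : (∑' (m : (β ⁻¹' {l} : Set ℕ)), (β (m : ℕ) : ℂ) * s m)
          = ∑ m ∈ hMf.toFinset, (β m : ℂ) * s m := by
        refine (tsum_subtype (β ⁻¹' {l}) fun m => (β m : ℂ) * s m).trans ?_
        refine (tsum_eq_sum (s := hMf.toFinset) fun b hb =>
          Set.indicator_of_notMem (by simpa [Set.Finite.mem_toFinset] using hb) _).trans ?_
        exact Finset.sum_congr rfl fun n hn =>
          Set.indicator_of_mem (by simpa [Set.Finite.mem_toFinset] using hn) _
      rw [eA, eB]
      have tEq : ∀ n ∈ hNf.toFinset, t n = ∑ m ∈ hMf.toFinset, d n m := by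
        intro n hn
        have hn' : α n = l := (memN n).mp hn
        rw [← (htB n).tsum_eq]
        apply tsum_eq_sum
        intro m hm
        have hm' : β m ≠ l := fun h => hm ((memM m).mpr h)
        exact dzero n m (by rw [hn']; exact fun h => hm' h.symm)
      have sEq : ∀ m ∈ hMf.toFinset, s m = ∑ n ∈ hNf.toFinset, d n m := by
        intro m hm
        have hm' : β m = l := (memM m).mp hm
        rw [← (hsC m).tsum_eq]
        apply tsum_eq_sum
        intro n hn
        have hn' : α n ≠ l := fun h => hn ((memN n).mpr h)
        exact dzero n m (by rw [hm']; exact hn')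
      calc ∑ n ∈ hNf.toFinset, (α n : ℂ) * t n
          = ∑ n ∈ hNf.toFinset, ∑ m ∈ hMf.toFinset, (l : ℂ) * d n m := by
            refine Finset.sum_congr rfl fun n hn => ?_
            rw [(memN n).mp hn, tEq n hn, Finset.mul_sum]
        _ = ∑ m ∈ hMf.toFinset, ∑ n ∈ hNf.toFinset, (l : ℂ) * d n m := Finset.sum_comm
        _ = ∑ m ∈ hMf.toFinset, (β m : ℂ) * s m := by
            refine Finset.sum_congr rfl fun m hm => ?_
            rw [(memM m).mp hm, sEq m hm, Finset.mul_sum]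
    · have hA : ∀ n : (α ⁻¹' {l} : Set ℕ), (α (n : ℕ) : ℂ) * t n = 0 := by
        intro n
        have h1 : α (n : ℕ) = l := n.2
        have h0 : α (n : ℕ) = 0 := le_antisymm (by rw [h1]; exact not_lt.mp hl) (hα _)
        rw [h0]
        simp
      have hB : ∀ m : (β ⁻¹' {l} : Set ℕ), (β (m : ℕ) : ℂ) * s m = 0 := by
        intro m
        have h1 : β (m : ℕ) = l := m.2
        have h0 : β (m : ℕ) = 0 := le_antisymm (by rw [h1]; exact not_lt.mp hl) (hβ _)
        rw [h0]
        simp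
      rw [tsum_congr hA, tsum_congr hB, tsum_zero, tsum_zero]
  calc ∑' n, (α n : ℂ) * t n
      = ∑' (l : ℝ), ∑' (n : (α ⁻¹' {l} : Set ℕ)), (α (n : ℕ) : ℂ) * t n :=
        (hDe.hasSum.tsum_fiberwise α).tsum_eq.symm
    _ = ∑' (l : ℝ), ∑' (m : (β ⁻¹' {l} : Set ℕ)), (β (m : ℕ) : ℂ) * s m :=
        tsum_congr fiberEq
    _ = ∑' m, (β m : ℂ) * s m := (hDf.hasSum.tsum_fiberwise β).tsum_eq
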